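/- Let $k$ be a field of characteristic zero, $A$ a commutative $k$-algebra, and $\partial \in \mathrm{Der}_k(A)$. Then for every $r \geq 0$, the $r$-th Fitting ideal of the module of Kähler differentials satisfies $\partial(\mathrm{Fitt}_r(\Omega^1_{A/k})) \subseteq \mathrm{Fitt}_r(\Omega^1_{A/k})$, provided $\Omega^1_{A/k}$ is finitely generated. -/

import Mathlib

/-- The `r`-th Fitting ideal of a module `M`: for a presentation
`(Fin n → R) →ₗ M` (surjective), it is generated by the `(n - r) × (n - r)`
minors of matrices whose rows are relations (elements of the kernel). -/
def fittingIdeal (R : Type*) [CommRing R] (M : Type*) [AddCommGroup M] [Module R M]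
    (r : ℕ) : Ideal R :=
  ⨆ (n : ℕ) (π : (Fin n → R) →ₗ[R] M) (_ : Function.Surjective π),
    Ideal.span { d : R | ∃ (m : ℕ) (_ : m + r = n) (v : Fin m → (Fin n → R))
      (g : Fin m → Fin n), (∀ i, π (v i) = 0) ∧
      d = Matrix.det (Matrix.of fun i j : Fin m => v i (g j)) }

open Finset Matrix


section Base
variable {A : Type*} [CommRing A]



theorem myVecSum {m : ℕ} (c : Fin m → A) : c = ∑ j, c j • (Pi.single j 1 : Fin m → A) := by
  funext j'
  simp [Pi.single_apply, Finset.sum_ite_eq']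

theorem myDetRowSum {m : ℕ} (M : Matrix (Fin m) (Fin m) A) (i : Fin m) {ι : Type*}
    [DecidableEq ι] (s : Finset ι) (f : ι → Fin m → A) :
    (M.updateRow i (∑ j ∈ s, f j)).det = ∑ j ∈ s, (M.updateRow i (f j)).det := by
  induction s using Finset.induction_on with
  | empty =>
    simp only [Finset.sum_empty]
    exact Matrix.det_eq_zero_of_row_eq_zero i (fun j => by simp)
  | @insert a s ha ih =>
    rw [Finset.sum_insert ha, Matrix.det_updateRow_add, ih, Finset.sum_insert ha]

theorem myDetColSum {m : ℕ} (M : Matrix (Fin m) (Fin m) A) (i : Fin m) {ι : Type*}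
    [DecidableEq ι] (s : Finset ι) (f : ι → Fin m → A) :
    (M.updateCol i (∑ j ∈ s, f j)).det = ∑ j ∈ s, (M.updateCol i (f j)).det := by
  induction s using Finset.induction_on with
  | empty =>
    simp only [Finset.sum_empty]
    exact Matrix.det_eq_zero_of_column_eq_zero i (fun j => by simp)
  | @insert a s ha ih =>
    rw [Finset.sum_insert ha, Matrix.det_updateCol_add, ih, Finset.sum_insert ha]

theorem myCofSymm {m : ℕ} (M : Matrix (Fin m) (Fin m) A) (i j : Fin m) :
    (M.updateRow i (Pi.single j 1)).det = (M.updateCol j (Pi.single i 1)).det := by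
  have h1 : (M.updateRow i (Pi.single j 1)).det = M.adjugate j i := (Matrix.adjugate_apply M j i).symm
  have h3 : M.updateCol j (Pi.single i 1) = (Mᵀ.updateRow j (Pi.single i 1))ᵀ := by
    rw [Matrix.updateRow_transpose, Matrix.transpose_transpose]
  have h2 : (M.updateCol j (Pi.single i 1)).det = Mᵀ.adjugate i j := by
    rw [h3, Matrix.det_transpose, Matrix.adjugate_apply]
  rw [h1, h2, ← Matrix.adjugate_transpose, Matrix.transpose_apply]
end Base

section Der
variable {k : Type*} [Field k] {A : Type*} [CommRing A] [Algebra k A]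



theorem myDerivProd (D : Derivation k A A) {ι : Type*} [DecidableEq ι] (s : Finset ι) (f : ι → A) :
    D (∏ i ∈ s, f i) = ∑ i ∈ s, D (f i) * ∏ j ∈ s.erase i, f j := by
  induction s using Finset.induction_on with
  | empty => simp
  | @insert a s ha ih =>
    have h1 : D (∏ i ∈ insert a s, f i) = f a * D (∏ i ∈ s, f i) + D (f a) * ∏ i ∈ s, f i := by
      rw [Finset.prod_insert ha, D.leibniz, smul_eq_mul, smul_eq_mul, mul_comm (∏ i ∈ s, f i)]
    rw [h1, ih, Finset.sum_insert ha, Finset.erase_insert ha, Finset.mul_sum, add_comm]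
    congr 1
    refine Finset.sum_congr rfl fun i hi => ?_
    rw [Finset.erase_insert_of_ne (ne_of_mem_of_not_mem hi ha).symm,
      Finset.prod_insert (fun h => ha (Finset.mem_of_mem_erase h))]
    ring

theorem myDerivDet (D : Derivation k A A) {m : ℕ} (M : Matrix (Fin m) (Fin m) A) :
    D M.det = ∑ i, (M.updateRow i (fun j => D (M i j))).det := by
  rw [det_apply']
  simp only [det_apply']
  rw [map_sum, Finset.sum_comm]
  refine Finset.sum_congr rfl fun σ _ => ?_
  rw [D.leibniz, smul_eq_mul, smul_eq_mul, D.map_intCast, mul_zero, add_zero, myDerivProd,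
    Finset.mul_sum]
  rw [← Equiv.sum_comp σ (fun i => ((Equiv.Perm.sign σ : ℤ) : A) *
      ∏ j, (M.updateRow i fun j' => D (M i j')) (σ j) j)]
  refine Finset.sum_congr rfl fun j₀ _ => ?_
  congr 1
  rw [← Finset.mul_prod_erase _ _ (Finset.mem_univ j₀)]
  congr 1
  · rw [Matrix.updateRow_apply, if_pos rfl]
  · refine Finset.prod_congr rfl fun j hj => ?_
    rw [Matrix.updateRow_apply, if_neg (σ.injective.ne (Finset.ne_of_mem_erase hj))]

theorem myKey (D : Derivation k A A) {M' : Type*} [AddCommGroup M'] [Module A M']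
    (N : M' → M') (hadd : ∀ x y, N (x + y) = N x + N y)
    (hleib : ∀ (a : A) (x : M'), N (a • x) = D a • x + a • N x)
    {n : ℕ} (π : (Fin n → A) →ₗ[A] M') (hs : Function.Surjective π)
    {m : ℕ} (v : Fin m → (Fin n → A)) (g : Fin m → Fin n) (hrel : ∀ i, π (v i) = 0) :
    D (Matrix.det (Matrix.of fun i j : Fin m => v i (g j))) ∈
      Ideal.span { d : A | ∃ (v' : Fin m → (Fin n → A)) (g' : Fin m → Fin n),
        (∀ i', π (v' i') = 0) ∧ d = Matrix.det (Matrix.of fun i j => v' i (g' j)) } := by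
  classical
  have hN0 : N 0 = 0 := by
    have := hleib 0 0
    simpa using this
  choose w hw using fun l : Fin n => hs (N (π (Pi.single l 1)))
  set Dt : (Fin n → A) → (Fin n → A) :=
    fun u => (fun j => D (u j)) + ∑ l, u l • w l with hDt
  have hpi : ∀ u, π (Dt u) = N (π u) := by
    intro u
    have h1 : π (Dt u) = (∑ l, D (u l) • π (Pi.single l 1)) + ∑ l, u l • π (w l) := by
      rw [hDt]
      simp only [map_add, map_sum, _root_.map_smul]
      congr 1
      conv_lhs => rw [myVecSum (fun j => D (u j))]
      simp [map_sum, _root_.map_smul]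
    have h2 : N (π u) = ∑ l, (D (u l) • π (Pi.single l 1) + u l • N (π (Pi.single l 1))) := by
      conv_lhs => rw [myVecSum u]
      rw [map_sum]
      rw [show N (∑ l, π (u l • (Pi.single l 1 : Fin n → A)))
          = ∑ l, N (π (u l • (Pi.single l 1 : Fin n → A))) from
        map_sum (AddMonoidHom.mk' N hadd) _ _]
      refine Finset.sum_congr rfl fun l _ => ?_
      rw [_root_.map_smul, hleib]
    rw [h1, h2, Finset.sum_add_distrib]
    congr 1
    exact Finset.sum_congr rfl fun l _ => by rw [hw]
  have hrel' : ∀ i, π (Dt (v i)) = 0 := fun i => by rw [hpi, hrel i, hN0]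
  set Mat : Matrix (Fin m) (Fin m) A := Matrix.of fun i j => v i (g j) with hMat
  set cof : Fin m → Fin m → A := fun i j => (Mat.updateRow i (Pi.single j 1)).det with hcof
  have hcofd : ∀ i j, cof i j = (Mat.updateRow i (Pi.single j 1)).det := fun _ _ => rfl
  set SP := Ideal.span { d : A | ∃ (v' : Fin m → (Fin n → A)) (g' : Fin m → Fin n),
      (∀ i', π (v' i') = 0) ∧ d = Matrix.det (Matrix.of fun i j => v' i (g' j)) } with hSP
  have hgen1 : ∀ i : Fin m, (Mat.updateRow i (fun j => Dt (v i) (g j))).det ∈ SP := by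
    intro i
    refine Ideal.subset_span ⟨Function.update v i (Dt (v i)), g, ?_, ?_⟩
    · intro a
      rcases eq_or_ne a i with rfl | hne
      · rw [Function.update_self]; exact hrel' _
      · rw [Function.update_of_ne hne]; exact hrel a
    · congr 1
      ext a b
      rw [Matrix.updateRow_apply, Matrix.of_apply, Function.update_apply]
      split <;> simp [hMat]
  have hgen2 : ∀ (l : Fin n) (j : Fin m), (Mat.updateCol j (fun i => v i l)).det ∈ SP := by
    intro l j
    refine Ideal.subset_span ⟨v, Function.update g j l, hrel, ?_⟩
    congr 1
    ext a b
    rw [Matrix.updateCol_apply, Matrix.of_apply, Function.update_apply]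
    split <;> simp [hMat]
  have hcol : ∀ (l : Fin n) (j : Fin m),
      ∑ i, v i l * cof i j = (Mat.updateCol j (fun i => v i l)).det := by
    intro l j
    conv_rhs => rw [myVecSum (fun i => v i l)]
    rw [myDetColSum]
    refine Finset.sum_congr rfl fun i _ => ?_
    rw [Matrix.det_updateCol_smul, hcofd, myCofSymm]
  have hmain : D Mat.det = (∑ i, (Mat.updateRow i (fun j => Dt (v i) (g j))).det)
      - ∑ l, ∑ j, w l (g j) * (Mat.updateCol j (fun i => v i l)).det := by
    rw [myDerivDet]
    have per_i : ∀ i, (Mat.updateRow i (fun j => D (Mat i j))).det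
        = (Mat.updateRow i (fun j => Dt (v i) (g j))).det
          - ∑ l, v i l * ∑ j, w l (g j) * cof i j := by
      intro i
      have hsplit : (fun j => D (Mat i j))
          = (fun j => Dt (v i) (g j)) - ∑ l, v i l • (fun j => w l (g j)) := by
        funext j
        simp only [Pi.sub_apply, Finset.sum_apply, Pi.smul_apply, smul_eq_mul, hDt,
          Pi.add_apply, hMat, Matrix.of_apply]
        ring
      rw [hsplit, sub_eq_add_neg, Matrix.det_updateRow_add]
      have hneg : (Mat.updateRow i (-(∑ l, v i l • fun j => w l (g j)))).det
          = -(Mat.updateRow i (∑ l, v i l • fun j => w l (g j))).det := by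
        have h := Matrix.det_updateRow_smul Mat i (-1 : A) (∑ l, v i l • fun j => w l (g j))
        rw [neg_one_smul] at h
        rw [h, neg_one_mul]
      rw [hneg, ← sub_eq_add_neg]
      congr 1
      rw [myDetRowSum]
      refine Finset.sum_congr rfl fun l _ => ?_
      rw [Matrix.det_updateRow_smul]
      congr 1
      conv_lhs => rw [myVecSum (fun j => w l (g j))]
      rw [myDetRowSum]
      refine Finset.sum_congr rfl fun j _ => ?_
      rw [Matrix.det_updateRow_smul, hcofd]
    rw [Finset.sum_congr rfl fun i _ => per_i i, Finset.sum_sub_distrib]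
    congr 1
    rw [Finset.sum_comm]
    refine Finset.sum_congr rfl fun l _ => ?_
    have h4 : (∑ i, v i l * ∑ j, w l (g j) * cof i j)
        = ∑ i, ∑ j, w l (g j) * (v i l * cof i j) := by
      refine Finset.sum_congr rfl fun i _ => ?_
      rw [Finset.mul_sum]
      exact Finset.sum_congr rfl fun j _ => by ring
    rw [h4, Finset.sum_comm]
    refine Finset.sum_congr rfl fun j _ => ?_
    rw [← Finset.mul_sum, hcol]
  rw [hmain]
  exact sub_mem (sum_mem fun i _ => hgen1 i)
    (sum_mem fun l _ => sum_mem fun j _ => Ideal.mul_mem_left _ _ (hgen2 l j))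

theorem myFittingInv (D : Derivation k A A) {M' : Type*} [AddCommGroup M'] [Module A M']
    (N : M' → M') (hadd : ∀ x y, N (x + y) = N x + N y)
    (hleib : ∀ (a : A) (x : M'), N (a • x) = D a • x + a • N x) :
    ∀ r : ℕ, ∀ x ∈ fittingIdeal A M' r, D x ∈ fittingIdeal A M' r := by
  intro r x hx
  have hFI : fittingIdeal A M' r = ⨆ (n : ℕ) (π : (Fin n → A) →ₗ[A] M')
      (_ : Function.Surjective π),
      Ideal.span { d : A | ∃ (m : ℕ) (_ : m + r = n) (v : Fin m → (Fin n → A))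
        (g : Fin m → Fin n), (∀ i, π (v i) = 0) ∧
        d = Matrix.det (Matrix.of fun i j : Fin m => v i (g j)) } := rfl
  rw [hFI] at hx
  refine Submodule.iSup_induction _ (motive := fun y => D y ∈ fittingIdeal A M' r) hx ?_ ?_ ?_
  · intro n y hy
    refine Submodule.iSup_induction _ (motive := fun y => D y ∈ fittingIdeal A M' r) hy ?_ ?_ ?_
    · intro π z hz
      by_cases hsurj : Function.Surjective π
      · rw [iSup_pos hsurj] at hz
        have hle : Ideal.span { d : A | ∃ (m : ℕ) (_ : m + r = n) (v : Fin m → (Fin n → A))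
            (g : Fin m → Fin n), (∀ i, π (v i) = 0) ∧
            d = Matrix.det (Matrix.of fun i j : Fin m => v i (g j)) }
            ≤ fittingIdeal A M' r := by
          rw [hFI]
          exact le_iSup_of_le n (le_iSup_of_le π (le_iSup_of_le hsurj le_rfl))
        refine (Submodule.span_induction
          (p := fun z _ => z ∈ fittingIdeal A M' r ∧ D z ∈ fittingIdeal A M' r)
          ?_ ?_ ?_ ?_ hz).2
        · intro d hd
          obtain ⟨m, hm, v, g, hrelv, rfl⟩ := hd
          refine ⟨hle (Ideal.subset_span ⟨m, hm, v, g, hrelv, rfl⟩), ?_⟩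
          refine hle (Ideal.span_mono ?_ (myKey D N hadd hleib π hsurj v g hrelv))
          rintro d' ⟨v', g', h1, h2⟩
          exact ⟨m, hm, v', g', h1, h2⟩
        · exact ⟨zero_mem _, by rw [map_zero]; exact zero_mem _⟩
        · rintro a b _ _ ⟨ha1, ha2⟩ ⟨hb1, hb2⟩
          exact ⟨add_mem ha1 hb1, by rw [map_add]; exact add_mem ha2 hb2⟩
        · rintro a z _ ⟨h1, h2⟩
          refine ⟨Submodule.smul_mem _ _ h1, ?_⟩
          rw [smul_eq_mul, D.leibniz, smul_eq_mul, smul_eq_mul]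
          exact add_mem (Ideal.mul_mem_left _ _ h2) (Ideal.mul_mem_right _ _ h1)
      · rw [iSup_neg hsurj, Submodule.mem_bot] at hz
        rw [hz, map_zero]; exact zero_mem _
    · show D (0 : A) ∈ fittingIdeal A M' r
      rw [map_zero]; exact zero_mem _
    · intro a b ha hb
      show D (a + b) ∈ fittingIdeal A M' r
      rw [map_add]; exact add_mem ha hb
  · show D (0 : A) ∈ fittingIdeal A M' r
    rw [map_zero]; exact zero_mem _
  · intro a b ha hb
    show D (a + b) ∈ fittingIdeal A M' r
    rw [map_add]; exact add_mem ha hb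


theorem myLieExists (D : Derivation k A A) :
    ∃ N : KaehlerDifferential k A → KaehlerDifferential k A,
      (∀ x y, N (x + y) = N x + N y) ∧
      (∀ (a : A) (x : KaehlerDifferential k A), N (a • x) = D a • x + a • N x) := by
  classical
  set H : (A →₀ A) → (A →₀ A) :=
    fun f => f.sum fun x y => Finsupp.single x (D y) + Finsupp.single (D x) y with hH
  have Hsingle : ∀ x y : A, H (Finsupp.single x y)
      = Finsupp.single x (D y) + Finsupp.single (D x) y := by
    intro x y
    rw [hH]
    exact Finsupp.sum_single_index (by simp)
  have Hadd : ∀ f g, H (f + g) = H f + H g := by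
    intro f g
    rw [hH]
    refine Finsupp.sum_add_index (by simp) ?_
    intro x _ y1 y2
    rw [map_add, Finsupp.single_add, Finsupp.single_add]
    abel
  set Hh : (A →₀ A) →+ (A →₀ A) := AddMonoidHom.mk' H Hadd with hHh
  have Hhap : ∀ f, Hh f = H f := fun f => rfl
  have Hsmul : ∀ (a : A) f, H (a • f) = a • H f + D a • f := by
    intro a f
    induction f using Finsupp.induction_linear with
    | zero => simp [hH]
    | add f g hf hg =>
      rw [smul_add, Hadd, hf, hg, Hadd, smul_add, smul_add]
      abel
    | single x y =>
      rw [Finsupp.smul_single, Hsingle, smul_eq_mul, D.leibniz, Hsingle, smul_add,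
        Finsupp.smul_single, Finsupp.smul_single, Finsupp.smul_single, Finsupp.single_add]
      simp only [smul_eq_mul]
      rw [mul_comm y (D a)]
      abel
  have hK : ∀ f ∈ KaehlerDifferential.kerTotal k A, H f ∈ KaehlerDifferential.kerTotal k A := by
    intro f hf
    refine (Submodule.span_induction (p := fun f _ => f ∈ KaehlerDifferential.kerTotal k A ∧
      H f ∈ KaehlerDifferential.kerTotal k A) ?_ ?_ ?_ ?_ hf).2
    · rintro f hf
      refine ⟨Submodule.subset_span hf, ?_⟩
      rcases hf with (⟨⟨x, y⟩, rfl⟩ | ⟨⟨x, y⟩, rfl⟩) | ⟨x, rfl⟩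
      · have : H (Finsupp.single x 1 + Finsupp.single y 1 - Finsupp.single (x + y) 1)
            = Finsupp.single (D x) 1 + Finsupp.single (D y) 1
              - Finsupp.single (D x + D y) 1 := by
          rw [show (Finsupp.single x 1 + Finsupp.single y 1 - Finsupp.single (x + y) 1 : A →₀ A)
            = Finsupp.single x 1 + Finsupp.single y 1 - Finsupp.single (x + y) 1 from rfl,
            ← Hhap, map_sub, map_add, Hhap, Hhap, Hhap, Hsingle, Hsingle, Hsingle, map_add]
          simp only [D.map_one_eq_zero, Finsupp.single_zero]
          abel
        rw [this]
        exact Submodule.subset_span (Or.inl (Or.inl ⟨(D x, D y), rfl⟩))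
      · have expand : H (Finsupp.single y x + Finsupp.single x y - Finsupp.single (x * y) 1)
            = (Finsupp.single (D y) x + Finsupp.single x (D y) - Finsupp.single (x * D y) 1)
            + (Finsupp.single (D x) y + Finsupp.single y (D x) - Finsupp.single (y * D x) 1)
            + (Finsupp.single (x * D y) 1 + Finsupp.single (y * D x) 1
                - Finsupp.single (x * D y + y * D x) 1) := by
          rw [← Hhap, map_sub, map_add, Hhap, Hhap, Hhap, Hsingle, Hsingle, Hsingle,
            D.leibniz, smul_eq_mul, smul_eq_mul]
          simp only [D.map_one_eq_zero, Finsupp.single_zero]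
          abel
        rw [expand]
        refine add_mem (add_mem ?_ ?_) ?_
        · exact Submodule.subset_span (Or.inl (Or.inr ⟨(x, D y), rfl⟩))
        · exact Submodule.subset_span (Or.inl (Or.inr ⟨(y, D x), rfl⟩))
        · exact Submodule.subset_span (Or.inl (Or.inl ⟨(x * D y, y * D x), rfl⟩))
      · have : H (Finsupp.single (algebraMap k A x) 1)
            = Finsupp.single (algebraMap k A 0) 1 := by
          rw [Hsingle, D.map_one_eq_zero, Finsupp.single_zero, D.map_algebraMap, map_zero,
            zero_add]
        rw [this]
        exact Submodule.subset_span (Or.inr ⟨0, rfl⟩)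
    · exact ⟨zero_mem _, by rw [show H 0 = 0 by simp [hH]]; exact zero_mem _⟩
    · rintro f g _ _ ⟨h1, h2⟩ ⟨h3, h4⟩
      exact ⟨add_mem h1 h3, by rw [Hadd]; exact add_mem h2 h4⟩
    · rintro a f _ ⟨h1, h2⟩
      refine ⟨Submodule.smul_mem _ _ h1, ?_⟩
      rw [Hsmul]
      exact add_mem (Submodule.smul_mem _ _ h2) (Submodule.smul_mem _ _ h1)
  set NQ : ((A →₀ A) ⧸ KaehlerDifferential.kerTotal k A)
      → ((A →₀ A) ⧸ KaehlerDifferential.kerTotal k A) :=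
    fun q => Quotient.liftOn' q (fun f => Submodule.Quotient.mk (H f)) (by
      intro f g hfg
      have h1 : f - g ∈ KaehlerDifferential.kerTotal k A :=
        (Submodule.Quotient.eq _).mp (Quotient.sound' hfg)
      show Submodule.Quotient.mk (H f) = Submodule.Quotient.mk (H g)
      rw [Submodule.Quotient.eq]
      rw [show H f - H g = H (f - g) from (map_sub Hh f g).symm]
      exact hK _ h1) with hNQ
  have NQ_mk : ∀ f, NQ (Submodule.Quotient.mk f) = Submodule.Quotient.mk (H f) := fun f => rfl
  have NQadd : ∀ p q, NQ (p + q) = NQ p + NQ q := by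
    intro p q
    obtain ⟨f, rfl⟩ := Submodule.Quotient.mk_surjective _ p
    obtain ⟨g, rfl⟩ := Submodule.Quotient.mk_surjective _ q
    rw [← Submodule.Quotient.mk_add, NQ_mk, NQ_mk, NQ_mk, Hadd, Submodule.Quotient.mk_add]
  have NQleib : ∀ (a : A) q, NQ (a • q) = D a • q + a • NQ q := by
    intro a q
    obtain ⟨f, rfl⟩ := Submodule.Quotient.mk_surjective _ q
    rw [← Submodule.Quotient.mk_smul, NQ_mk, NQ_mk, Hsmul, Submodule.Quotient.mk_add,
      Submodule.Quotient.mk_smul, Submodule.Quotient.mk_smul]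
    abel
  set e := KaehlerDifferential.quotKerTotalEquiv k A with he
  refine ⟨fun ω => e (NQ (e.symm ω)), ?_, ?_⟩
  · intro x y
    show e (NQ (e.symm (x + y))) = e (NQ (e.symm x)) + e (NQ (e.symm y))
    rw [map_add, NQadd, map_add]
  · intro a x
    show e (NQ (e.symm (a • x))) = D a • x + a • e (NQ (e.symm x))
    rw [_root_.map_smul, NQleib, map_add, _root_.map_smul, _root_.map_smul,
      LinearEquiv.apply_symm_apply]

end Der

/-- in characteristic zero, the Fitting ideals of the module of
Kähler differentials are invariant under every `k`-derivation of `A`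
(assuming `Ω¹_{A/k}` is finitely generated). -/
theorem stmt_9 (k : Type*) [Field k] [CharZero k] (A : Type*) [CommRing A] [Algebra k A]
    (D : Derivation k A A) [Module.Finite A (KaehlerDifferential k A)] :
    ∀ r : ℕ, ∀ x ∈ fittingIdeal A (KaehlerDifferential k A) r,
      D x ∈ fittingIdeal A (KaehlerDifferential k A) r := by
  obtain ⟨N, hadd, hleib⟩ := myLieExists D
  exact myFittingInv D N hadd hleib
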